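/- Let k be a commutative ring and Ω a semigroup. Let (D, {≺_ω, ≻_ω | ω ∈ Ω}) be a dendriform family algebra over k. Define bilinear operations on D ⊗ kΩ by (x ⊗ α) ≺ (y ⊗ β) := (x ≺_β y) ⊗ αβ and (x ⊗ α) ≻ (y ⊗ β) := (x ≻_α y) ⊗ αβ for x, y ∈ D and α, β ∈ Ω. Then (D ⊗ kΩ, ≺, ≻) is a dendriform algebra, i.e. for all u, v, w ∈ D ⊗ kΩ: (u ≺ v) ≺ w = u ≺ (v ≺ w + v ≻ w), (u ≻ v) ≺ w = u ≻ (v ≺ w), and (u ≺ v + u ≻ v) ≻ w = u ≻ (v ≻ w). -/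

import Mathlib

open scoped TensorProduct

/-- Let `(D, {≺_ω, ≻_ω | ω ∈ Ω})` be a dendriform family algebra over a
commutative ring `k`, `Ω` a semigroup, and let `kΩ := Ω →₀ k` be the free `k`-module on
`Ω`.  The bilinear operations on `D ⊗ kΩ` determined by
`(x ⊗ α) ≺ (y ⊗ β) := (x ≺_β y) ⊗ αβ` and `(x ⊗ α) ≻ (y ⊗ β) := (x ≻_α y) ⊗ αβ`
make `D ⊗ kΩ` a dendriform algebra. -/
theorem dendriformFamily_tensor_dendriform
    {k D Ω : Type*} [CommRing k] [AddCommGroup D] [Module k D] [Semigroup Ω]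
    (prec succ : Ω → D →ₗ[k] D →ₗ[k] D)
    (h1 : ∀ (α β : Ω) (x y z : D),
      prec β (prec α x y) z = prec (α * β) x (prec β y z + succ α y z))
    (h2 : ∀ (α β : Ω) (x y z : D),
      prec β (succ α x y) z = succ α x (prec β y z))
    (h3 : ∀ (α β : Ω) (x y z : D),
      succ (α * β) (prec β x y + succ α x y) z = succ α x (succ β y z))
    (Prec Succ : (D ⊗[k] (Ω →₀ k)) →ₗ[k] (D ⊗[k] (Ω →₀ k)) →ₗ[k] (D ⊗[k] (Ω →₀ k)))
    (hPrec : ∀ (x y : D) (α β : Ω),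
      Prec (x ⊗ₜ[k] Finsupp.single α 1) (y ⊗ₜ[k] Finsupp.single β 1)
        = (prec β x y) ⊗ₜ[k] Finsupp.single (α * β) 1)
    (hSucc : ∀ (x y : D) (α β : Ω),
      Succ (x ⊗ₜ[k] Finsupp.single α 1) (y ⊗ₜ[k] Finsupp.single β 1)
        = (succ α x y) ⊗ₜ[k] Finsupp.single (α * β) 1) :
    ∀ u v w : D ⊗[k] (Ω →₀ k),
      Prec (Prec u v) w = Prec u (Prec v w + Succ v w) ∧
      Prec (Succ u v) w = Succ u (Prec v w) ∧
      Succ (Prec u v + Succ u v) w = Succ u (Succ v w) := by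
  classical
  set S : Set (D ⊗[k] (Ω →₀ k)) :=
    {t | ∃ (x : D) (α : Ω), t = x ⊗ₜ[k] Finsupp.single α (1 : k)} with hSdef
  have hspan : ∀ t : D ⊗[k] (Ω →₀ k), t ∈ Submodule.span k S := by
    intro t
    induction t using TensorProduct.induction_on with
    | zero => exact Submodule.zero_mem _
    | add a b ha hb => exact Submodule.add_mem _ ha hb
    | tmul x f =>
      induction f using Finsupp.induction_linear with
      | zero => simp
      | add f g hf hg =>
        rw [TensorProduct.tmul_add]; exact Submodule.add_mem _ hf hg
      | single a b =>
        have : x ⊗ₜ[k] Finsupp.single a b = b • (x ⊗ₜ[k] Finsupp.single a (1 : k)) := by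
          rw [← TensorProduct.tmul_smul, Finsupp.smul_single, smul_eq_mul, mul_one]
        rw [this]
        exact Submodule.smul_mem _ _ (Submodule.subset_span ⟨x, a, rfl⟩)
  intro u v w
  induction hspan u using Submodule.span_induction generalizing v w with
  | zero => simp
  | add u₁ u₂ _ _ hu₁ hu₂ =>
    obtain ⟨e1, e2, e3⟩ := hu₁ v w
    obtain ⟨f1, f2, f3⟩ := hu₂ v w
    simp only [map_add, LinearMap.add_apply] at e3 f3
    refine ⟨?_, ?_, ?_⟩ <;>
      simp only [map_add, LinearMap.add_apply, e1, e2, ← e3, f1, f2, ← f3] <;> abel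
  | smul a u₁ _ hu₁ =>
    obtain ⟨e1, e2, e3⟩ := hu₁ v w
    simp only [map_add, LinearMap.add_apply] at e3
    refine ⟨?_, ?_, ?_⟩ <;>
      simp only [map_smul, LinearMap.smul_apply, map_add, LinearMap.add_apply,
        e1, e2, ← e3, smul_add]
  | mem u₁ hu₁ =>
    obtain ⟨x, α, rfl⟩ := hu₁
    induction hspan v using Submodule.span_induction generalizing w with
    | zero => simp
    | add v₁ v₂ _ _ hv₁ hv₂ =>
      obtain ⟨e1, e2, e3⟩ := hv₁ w
      obtain ⟨f1, f2, f3⟩ := hv₂ w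
      simp only [map_add, LinearMap.add_apply] at e3 f3
      refine ⟨?_, ?_, ?_⟩ <;>
        simp only [map_add, LinearMap.add_apply, e1, e2, ← e3, f1, f2, ← f3] <;> abel
    | smul a v₁ _ hv₁ =>
      obtain ⟨e1, e2, e3⟩ := hv₁ w
      simp only [map_add, LinearMap.add_apply] at e3
      refine ⟨?_, ?_, ?_⟩ <;>
        simp only [map_smul, LinearMap.smul_apply, map_add, LinearMap.add_apply,
          e1, e2, ← e3, smul_add]
    | mem v₁ hv₁ =>
      obtain ⟨y, β, rfl⟩ := hv₁
      induction hspan w using Submodule.span_induction with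
      | zero => simp
      | add w₁ w₂ _ _ hw₁ hw₂ =>
        obtain ⟨e1, e2, e3⟩ := hw₁
        obtain ⟨f1, f2, f3⟩ := hw₂
        simp only [map_add, LinearMap.add_apply] at e3 f3
        refine ⟨?_, ?_, ?_⟩ <;>
          simp only [map_add, LinearMap.add_apply, e1, e2, ← e3, f1, f2, ← f3] <;> abel
      | smul a w₁ _ hw₁ =>
        obtain ⟨e1, e2, e3⟩ := hw₁
        simp only [map_add, LinearMap.add_apply] at e3
        refine ⟨?_, ?_, ?_⟩ <;>
          simp only [map_smul, LinearMap.smul_apply, map_add, LinearMap.add_apply,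
            e1, e2, ← e3, smul_add]
      | mem w₁ hw₁ =>
        obtain ⟨z, γ, rfl⟩ := hw₁
        refine ⟨?_, ?_, ?_⟩
        · rw [hPrec, hPrec, hPrec, hSucc, ← TensorProduct.add_tmul, hPrec,
            h1 β γ, mul_assoc]
        · rw [hSucc, hPrec, hPrec, hSucc, h2 α γ, mul_assoc]
        · rw [hPrec, hSucc, ← TensorProduct.add_tmul, hSucc, hSucc, h3 α β, mul_assoc, hSucc]
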